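/- For any irrational x in [0,1], the logarithms of the convergent denominators satisfy (1/2)∑_{j=0}^{n-1} log(1 + ω_j) − log(√2) ≤ log q_n ≤ ∑_{j=0}^{n-1} log(1 + ω_j) for every n, where ω_j are the partial quotients. -/

import Mathlib

open Real Set

/-- The Gauss map. -/
noncomputable def gaussMap (x : ℝ) : ℝ := if x = 0 then 0 else 1 / x - ⌊1 / x⌋

/-- The n-th partial quotient of x. -/
noncomputable def cfOmega (x : ℝ) (n : ℕ) : ℕ := (⌊1 / (gaussMap^[n] x)⌋).toNat

/-- (q_{n-1}, q_n) for the convergent denominators of x, with q_{-1} = 0, q_0 = 1. -/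
noncomputable def cfQPair (x : ℝ) : ℕ → ℕ × ℕ
  | 0 => (0, 1)
  | n + 1 => ((cfQPair x n).2, cfOmega x n * (cfQPair x n).2 + (cfQPair x n).1)

/-- The denominator q_n of the n-th convergent of x. -/
noncomputable def cfQ (x : ℝ) (n : ℕ) : ℕ := (cfQPair x n).2

/-- (p_{n-1}, p_n) for the convergent numerators of x, with p_{-1} = 1, p_0 = 0. -/
noncomputable def cfPPair (x : ℝ) : ℕ → ℕ × ℕ
  | 0 => (1, 0)
  | n + 1 => ((cfPPair x n).2, cfOmega x n * (cfPPair x n).2 + (cfPPair x n).1)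

/-- The numerator p_n of the n-th convergent of x. -/
noncomputable def cfP (x : ℝ) (n : ℕ) : ℕ := (cfPPair x n).2

lemma gauss_step (y : ℝ) (hy : y ∈ Ioo (0:ℝ) 1) (hi : Irrational y) :
    gaussMap y ∈ Ioo (0:ℝ) 1 ∧ Irrational (gaussMap y) := by
  have hy0 : y ≠ 0 := ne_of_gt hy.1
  have hinv : Irrational (1 / y) := by rw [one_div]; exact hi.inv
  have heq : gaussMap y = Int.fract (1 / y) := by
    rw [gaussMap, if_neg hy0, Int.fract]
  have hirr2 : Irrational (gaussMap y) := by
    rw [heq, Int.fract]; exact hinv.sub_intCast ⌊1/y⌋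
  refine ⟨⟨?_, by rw [heq]; exact Int.fract_lt_one _⟩, hirr2⟩
  rcases lt_or_eq_of_le (Int.fract_nonneg (1/y)) with h | h
  · rw [heq]; exact h
  · exact absurd ((heq.trans h.symm)) (hirr2.ne_int 0 ∘ (by simpa using ·))

lemma iter_mem (x : ℝ) (hx : x ∈ Icc (0:ℝ) 1) (hirr : Irrational x) (n : ℕ) :
    gaussMap^[n] x ∈ Ioo (0:ℝ) 1 ∧ Irrational (gaussMap^[n] x) := by
  induction n with
  | zero =>
    refine ⟨⟨lt_of_le_of_ne hx.1 ?_, lt_of_le_of_ne hx.2 ?_⟩, hirr⟩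
    · exact fun h => (hirr.ne_int 0 (by simpa using h.symm))
    · exact fun h => (hirr.ne_int 1 (by simpa using h))
  | succ n ih =>
    rw [Function.iterate_succ_apply']
    exact gauss_step _ ih.1 ih.2

lemma omega_ge (x : ℝ) (hx : x ∈ Icc (0:ℝ) 1) (hirr : Irrational x) (n : ℕ) :
    1 ≤ cfOmega x n := by
  obtain ⟨⟨h0, h1⟩, -⟩ := iter_mem x hx hirr n
  have : (1:ℝ) ≤ 1 / gaussMap^[n] x := by
    rw [le_div_iff₀ h0]; linarith
  have hfl : (1:ℤ) ≤ ⌊1 / gaussMap^[n] x⌋ := by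
    exact_mod_cast Int.le_floor.mpr (by exact_mod_cast this)
  simpa [cfOmega] using Int.toNat_le_toNat hfl

lemma q_bounds (x : ℝ) (hx : x ∈ Icc (0:ℝ) 1) (hirr : Irrational x) (n : ℕ) :
    (cfQPair x n).1 ≤ (cfQPair x n).2 ∧ 1 ≤ (cfQPair x n).2 ∧
    (cfQPair x n).2 ≤ ∏ j ∈ Finset.range n, (1 + cfOmega x j) ∧
    (∏ j ∈ Finset.range n, (1 + cfOmega x j))
      ≤ (cfQPair x n).2 * ((cfQPair x n).2 + (cfQPair x n).1) := by
  induction n with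
  | zero => simp [cfQPair]
  | succ n ih =>
    obtain ⟨hab, hb1, hub, hlb⟩ := ih
    set a := (cfQPair x n).1
    set b := (cfQPair x n).2
    have hw : 1 ≤ cfOmega x n := omega_ge x hx hirr n
    set w := cfOmega x n
    have h1 : (cfQPair x (n+1)).1 = b := rfl
    have h2 : (cfQPair x (n+1)).2 = w * b + a := rfl
    rw [h1, h2, Finset.prod_range_succ]
    refine ⟨by nlinarith, by nlinarith, by nlinarith, ?_⟩
    calc (∏ j ∈ Finset.range n, (1 + cfOmega x j)) * (1 + w)
        ≤ (b * (b + a)) * (1 + w) := by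
          exact Nat.mul_le_mul_right _ hlb
      _ ≤ (w * b + a) * (w * b + a + b) := by
          zify at hw hab hb1 ⊢
          have hb0 : (0:ℤ) ≤ (b:ℤ) := by positivity
          nlinarith [mul_nonneg (mul_nonneg (sub_nonneg.mpr hw) hb0) hb0]

theorem stmt3 (x : ℝ) (hx : x ∈ Icc (0:ℝ) 1) (hirr : Irrational x) (n : ℕ) :
    (1 / 2) * (∑ j ∈ Finset.range n, Real.log (1 + (cfOmega x j : ℝ))) - Real.log (Real.sqrt 2)
        ≤ Real.log (cfQ x n : ℝ) ∧
    Real.log (cfQ x n : ℝ) ≤ ∑ j ∈ Finset.range n, Real.log (1 + (cfOmega x j : ℝ)) := by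
  obtain ⟨hab, hb1, hub, hlb⟩ := q_bounds x hx hirr n
  set a := (cfQPair x n).1
  set b := (cfQPair x n).2
  have hcfq : cfQ x n = b := rfl
  have hsum : ∑ j ∈ Finset.range n, Real.log (1 + (cfOmega x j : ℝ))
      = Real.log ((∏ j ∈ Finset.range n, (1 + cfOmega x j) : ℕ) : ℝ) := by
    push_cast
    rw [Real.log_prod]
    intro j _; positivity
  have hbpos : (0:ℝ) < (b:ℝ) := by exact_mod_cast hb1
  have hPpos : (0:ℝ) < ((∏ j ∈ Finset.range n, (1 + cfOmega x j) : ℕ) : ℝ) := by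
    exact_mod_cast Nat.lt_of_lt_of_le hb1 hub
  constructor
  · rw [hcfq, hsum, Real.log_sqrt (by norm_num)]
    have hP2 : ((∏ j ∈ Finset.range n, (1 + cfOmega x j) : ℕ) : ℝ) ≤ 2 * (b:ℝ)^2 := by
      have : (∏ j ∈ Finset.range n, (1 + cfOmega x j)) ≤ 2 * b^2 := by
        calc _ ≤ b * (b + a) := hlb
          _ ≤ 2 * b^2 := by nlinarith
      exact_mod_cast this
    have := Real.log_le_log hPpos hP2
    rw [Real.log_mul (by norm_num) (by positivity), Real.log_pow] at this
    push_cast at this ⊢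
    linarith
  · rw [hcfq, hsum]
    exact Real.log_le_log hbpos (by exact_mod_cast hub)
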